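/- Let H be a separable real Hilbert space, Y a real Banach space, C ⊆ Y* a nonempty convex weak*-compact set, Φ : H × ℝ^m → Y continuous, and h : H → ℝ convex and continuously differentiable such that for every v* ∈ C the scalarization Φ^h_{v*}(x,z) := v*(Φ(x,z)) + h(x) is convex on H × ℝ^m. Define S(x,z) := sup_{v* ∈ C} Φ^h_{v*}(x,z). Then for every λ > 0 and every (x,z) ∈ H × ℝ^m, the Moreau envelope of the supremum equals the maximum of the Moreau envelopes of the scalarizations: M_λS(x,z) = max_{v* ∈ C} M_λ(Φ^h_{v*})(x,z), where the maximum on the right is attained. (Proposition 2.4.) -/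

import Mathlib

open Filter Topology


section aux
variable {P : Type*} [NormedAddCommGroup P] [InnerProductSpace ℝ P]

/-- A convex function bounded above on a ball has a linear lower bound. -/
lemma aux_lin_lb {f : P → ℝ} (hf : ConvexOn ℝ Set.univ f) {w : P} {r Mb : ℝ}
    (hr : 0 < r) (hball : ∀ u, ‖u - w‖ ≤ r → f u ≤ Mb) (u : P) :
    f w - (Mb - f w) / r * ‖u - w‖ ≤ f u := by
  have hMb : f w ≤ Mb := hball w (by simp [hr.le])
  have hs0 : (0:ℝ) ≤ ‖u - w‖ := norm_nonneg _
  rcases eq_or_lt_of_le hs0 with h0 | hspos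
  · have hu : u = w := by rwa [eq_comm, norm_sub_eq_zero_iff] at h0
    subst hu; rw [← h0]; simp
  set s : ℝ := ‖u - w‖ with hs
  suffices hgoal : r * (f w - f u) ≤ (Mb - f w) * s by
    have h2 : f w - f u ≤ (Mb - f w) / r * s := by
      rw [div_mul_eq_mul_div, le_div_iff₀ hr]; linarith
    linarith
  rcases le_or_gt s r with hsr | hrs
  · -- inside the ball
    have hy : ‖(w + (r / s) • (w - u)) - w‖ = r := by
      have e1 : (w + (r / s) • (w - u)) - w = (r / s) • (w - u) := by module
      rw [e1, norm_smul, norm_sub_rev, Real.norm_eq_abs, abs_of_pos (div_pos hr hspos), ← hs]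
      field_simp
    have hfy : f (w + (r / s) • (w - u)) ≤ Mb := hball _ hy.le
    have hrspos : (0:ℝ) < r + s := by positivity
    have hcomb : (r / (r + s)) • u + (s / (r + s)) • (w + (r / s) • (w - u)) = w := by
      match_scalars <;> (field_simp; try ring)
    have h0a : (0:ℝ) ≤ r / (r + s) := (div_pos hr hrspos).le
    have h0b : (0:ℝ) ≤ s / (r + s) := (div_pos hspos hrspos).le
    have hab : r / (r + s) + s / (r + s) = 1 := by field_simp
    have hcvx := hf.2 (Set.mem_univ u) (Set.mem_univ (w + (r / s) • (w - u))) h0a h0b hab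
    rw [hcomb] at hcvx
    simp only [smul_eq_mul] at hcvx
    have h1 := mul_le_mul_of_nonneg_left hcvx hrspos.le
    have e : (r + s) * (r / (r + s) * f u + s / (r + s) * f (w + (r / s) • (w - u)))
        = r * f u + s * f (w + (r / s) • (w - u)) := by field_simp
    rw [e] at h1
    have h2 : s * f (w + (r / s) • (w - u)) ≤ s * Mb := mul_le_mul_of_nonneg_left hfy hs0
    linarith
  · -- outside the ball
    have ht0 : 0 < r / s := div_pos hr hspos
    have ht1 : r / s < 1 := (div_lt_one hspos).2 hrs
    set y : P := w + (r / s) • (u - w) with hy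
    have hrefl : ‖(w + (r / s) • (w - u)) - w‖ = r := by
      have e1 : (w + (r / s) • (w - u)) - w = (r / s) • (w - u) := by module
      rw [e1, norm_smul, Real.norm_eq_abs, abs_of_pos ht0, norm_sub_rev, ← hs]; field_simp
    have hfy2 : f (w + (r / s) • (w - u)) ≤ Mb := hball _ hrefl.le
    have hmid : f w ≤ (1/2 : ℝ) * f y + (1/2 : ℝ) * f (w + (r / s) • (w - u)) := by
      have h0a : (0:ℝ) ≤ 1/2 := by norm_num
      have hab : (1/2 : ℝ) + 1/2 = 1 := by norm_num
      have hc := hf.2 (Set.mem_univ y) (Set.mem_univ (w + (r / s) • (w - u))) h0a h0a hab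
      have e : (1/2 : ℝ) • y + (1/2 : ℝ) • (w + (r / s) • (w - u)) = w := by
        rw [hy]; module
      rw [e] at hc; simpa using hc
    have hfylb : 2 * f w - Mb ≤ f y := by linarith
    have hseg : f y ≤ (1 - r / s) * f w + (r / s) * f u := by
      have h0a : (0:ℝ) ≤ 1 - r/s := by linarith
      have hab : (1 - r/s) + r/s = 1 := by ring
      have hc := hf.2 (Set.mem_univ w) (Set.mem_univ u) h0a ht0.le hab
      have e : (1 - r / s) • w + (r / s) • u = y := by rw [hy]; module
      rw [e] at hc; simpa using hc
    have h2 := mul_le_mul_of_nonneg_left (hfylb.trans hseg) hs0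
    have e2 : s * ((1 - r / s) * f w + (r / s) * f u) = (s - r) * f w + r * f u := by
      field_simp
    rw [e2] at h2
    linarith

/-- A convex function continuous (hence bounded above on a ball) plus a quadratic
is bounded below. -/
lemma aux_bddBelow {f : P → ℝ} (hf : ConvexOn ℝ Set.univ f) (hfc : Continuous f)
    (w : P) {lam : ℝ} (hlam : 0 < lam) :
    ∃ c, ∀ u, c ≤ f u + ‖w - u‖ ^ 2 / (2 * lam) := by
  obtain ⟨δ, hδ, hd⟩ := Metric.continuousAt_iff.mp hfc.continuousAt 1 one_pos
  have hball : ∀ u, ‖u - w‖ ≤ δ/2 → f u ≤ f w + 1 := by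
    intro u hu
    have h1 : dist u w < δ := by rw [dist_eq_norm]; linarith
    have h2 := hd h1
    rw [Real.dist_eq] at h2
    have := (abs_lt.1 h2).2
    linarith
  have hr2 : (0:ℝ) < δ/2 := by positivity
  refine ⟨f w - lam * ((f w + 1 - f w) / (δ/2)) ^ 2 / 2, fun u => ?_⟩
  have h1 := aux_lin_lb hf hr2 hball u
  set K := (f w + 1 - f w) / (δ/2) with hK
  set s := ‖u - w‖ with hs
  have hwu : ‖w - u‖ = s := norm_sub_rev w u
  rw [hwu]
  have hs0 : (0:ℝ) ≤ s := norm_nonneg _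
  have hsq : 0 ≤ (s - lam * K) ^ 2 / (2 * lam) := by positivity
  have he : s ^ 2 / (2 * lam) - K * s + lam * K ^ 2 / 2 = (s - lam * K) ^ 2 / (2 * lam) := by
    field_simp; ring
  linarith

/-- Midpoint strong-convexity inequality for the Moreau objective. -/
lemma aux_mid {f : P → ℝ} (hf : ConvexOn ℝ Set.univ f) (w : P) {lam : ℝ} (hlam : 0 < lam)
    (u v : P) :
    f ((1/2:ℝ) • u + (1/2:ℝ) • v) + ‖w - ((1/2:ℝ) • u + (1/2:ℝ) • v)‖ ^ 2 / (2 * lam)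
      ≤ ((f u + ‖w - u‖ ^ 2 / (2 * lam)) + (f v + ‖w - v‖ ^ 2 / (2 * lam))) / 2
        - ‖u - v‖ ^ 2 / (8 * lam) := by
  have hpar : ‖(w - u) + (w - v)‖ ^ 2 + ‖u - v‖ ^ 2 = 2 * (‖w - u‖ ^ 2 + ‖w - v‖ ^ 2) := by
    have hp := parallelogram_law_with_norm ℝ (w - u) (w - v)
    have e2 : (w - u) - (w - v) = v - u := by abel
    rw [e2, norm_sub_rev] at hp
    ring_nf at hp ⊢
    linarith
  have hn : ‖w - ((1/2:ℝ) • u + (1/2:ℝ) • v)‖ ^ 2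
      = (‖w - u‖ ^ 2 + ‖w - v‖ ^ 2) / 2 - ‖u - v‖ ^ 2 / 4 := by
    have e : w - ((1/2:ℝ) • u + (1/2:ℝ) • v) = (1/2:ℝ) • ((w - u) + (w - v)) := by module
    rw [e, norm_smul, Real.norm_eq_abs, abs_of_pos (by norm_num : (0:ℝ) < 1/2), mul_pow]
    nlinarith [hpar]
  have h0a : (0:ℝ) ≤ 1/2 := by norm_num
  have hab : (1/2:ℝ) + 1/2 = 1 := by norm_num
  have key := hf.2 (Set.mem_univ u) (Set.mem_univ v) h0a h0a hab
  simp only [smul_eq_mul] at key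
  rw [hn]
  have e2 : ((f u + ‖w - u‖ ^ 2 / (2 * lam)) + (f v + ‖w - v‖ ^ 2 / (2 * lam))) / 2
        - ‖u - v‖ ^ 2 / (8 * lam)
      = (1/2 * f u + 1/2 * f v)
        + ((‖w - u‖ ^ 2 + ‖w - v‖ ^ 2) / 2 - ‖u - v‖ ^ 2 / 4) / (2 * lam) := by
    field_simp; ring
  rw [e2]
  exact add_le_add_left key _

/-- The Moreau objective of a continuous convex function attains its minimum. -/
lemma aux_argmin [CompleteSpace P] {f : P → ℝ} (hf : ConvexOn ℝ Set.univ f)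
    (hfc : Continuous f) (w : P) {lam : ℝ} (hlam : 0 < lam) :
    ∃ u', ∀ u, f u' + ‖w - u'‖ ^ 2 / (2 * lam) ≤ f u + ‖w - u‖ ^ 2 / (2 * lam) := by
  obtain ⟨c, hc⟩ := aux_bddBelow hf hfc w hlam
  set F : P → ℝ := fun u => f u + ‖w - u‖ ^ 2 / (2 * lam) with hF
  have hne : (Set.range F).Nonempty := ⟨F w, ⟨w, rfl⟩⟩
  have hbdd : BddBelow (Set.range F) := ⟨c, by rintro _ ⟨u, rfl⟩; exact hc u⟩
  set I : ℝ := sInf (Set.range F) with hI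
  have hIle : ∀ u, I ≤ F u := fun u => csInf_le hbdd ⟨u, rfl⟩
  have hseq : ∀ n : ℕ, ∃ u, F u < I + 1/(n+1) := by
    intro n
    have hlt : I < I + 1/(n+1) := lt_add_of_pos_right I (by positivity)
    obtain ⟨_, ⟨u, rfl⟩, hu⟩ := exists_lt_of_csInf_lt hne hlt
    exact ⟨u, hu⟩
  choose u hu using hseq
  have hpair : ∀ n k : ℕ, ‖u n - u k‖ ^ 2 ≤ 4 * lam * (1/(n+1) + 1/(k+1)) := by
    intro n k
    have hm := aux_mid hf w hlam (u n) (u k)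
    have hImid := hIle ((1/2:ℝ) • u n + (1/2:ℝ) • u k)
    have h1 := hu n
    have h2 := hu k
    have h3 : ‖u n - u k‖ ^ 2 / (8 * lam) ≤ (1/(n+1) + 1/(k+1)) / 2 := by
      simp only [hF] at hImid hm h1 h2 ⊢
      linarith
    have h4 := mul_le_mul_of_nonneg_right h3 (by positivity : (0:ℝ) ≤ 8 * lam)
    have e1 : ‖u n - u k‖ ^ 2 / (8 * lam) * (8 * lam) = ‖u n - u k‖ ^ 2 := by field_simp
    have e2 : (1/((n:ℝ)+1) + 1/((k:ℝ)+1)) / 2 * (8 * lam) = 4 * lam * (1/(n+1) + 1/(k+1)) := by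
      ring
    rw [e1, e2] at h4
    exact h4
  have hcauchy : CauchySeq u := by
    rw [Metric.cauchySeq_iff]
    intro ε hε
    obtain ⟨N, hN⟩ := exists_nat_gt (8 * lam / ε ^ 2)
    refine ⟨N, fun p hp q hq => ?_⟩
    have h1 := hpair p q
    have hp1 : 1/((p:ℝ)+1) ≤ 1/((N:ℝ)+1) := by
      apply one_div_le_one_div_of_le (by positivity)
      have : (N:ℝ) ≤ p := by exact_mod_cast hp
      linarith
    have hq1 : 1/((q:ℝ)+1) ≤ 1/((N:ℝ)+1) := by
      apply one_div_le_one_div_of_le (by positivity)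
      have : (N:ℝ) ≤ q := by exact_mod_cast hq
      linarith
    have hN8 : 8 * lam / ((N:ℝ)+1) < ε ^ 2 := by
      rw [div_lt_iff₀ (by positivity)]
      have h8 : 0 < ε ^ 2 := by positivity
      rw [div_lt_iff₀ h8] at hN
      nlinarith
    have h2 : ‖u p - u q‖ ^ 2 < ε ^ 2 := by
      have : 4 * lam * (1/((p:ℝ)+1) + 1/((q:ℝ)+1)) ≤ 8 * lam / ((N:ℝ)+1) := by
        have e3 : 2/((N:ℝ)+1) = 1/((N:ℝ)+1) + 1/((N:ℝ)+1) := by ring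
        have : 1/((p:ℝ)+1) + 1/((q:ℝ)+1) ≤ 2/((N:ℝ)+1) := by rw [e3]; linarith
        calc 4 * lam * (1/((p:ℝ)+1) + 1/((q:ℝ)+1)) ≤ 4 * lam * (2/((N:ℝ)+1)) := by
              apply mul_le_mul_of_nonneg_left this (by positivity)
          _ = 8 * lam / ((N:ℝ)+1) := by ring
      linarith
    rw [dist_eq_norm]
    exact lt_of_pow_lt_pow_left₀ 2 hε.le h2
  obtain ⟨u', hu'⟩ := cauchySeq_tendsto_of_complete hcauchy
  have hFc : Continuous F := by
    apply hfc.add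
    exact ((continuous_const.sub continuous_id).norm.pow 2).div_const (2 * lam)
  have htend : Tendsto (fun n => F (u n)) atTop (𝓝 I) := by
    have hupper : Tendsto (fun n : ℕ => I + 1/((n:ℝ)+1)) atTop (𝓝 I) := by
      have h0 : Tendsto (fun n : ℕ => 1/((n:ℝ)+1)) atTop (𝓝 0) :=
        tendsto_one_div_add_atTop_nhds_zero_nat
      simpa using tendsto_const_nhds.add h0
    exact tendsto_of_tendsto_of_tendsto_of_le_of_le tendsto_const_nhds hupper
      (fun n => hIle (u n)) (fun n => (hu n).le)
  have hFu' : F u' = I :=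
    tendsto_nhds_unique ((hFc.tendsto u').comp hu') htend
  refine ⟨u', fun v => ?_⟩
  have hle := hIle v
  rw [← hFu'] at hle
  exact hle

/-- Quadratic growth of the Moreau objective at its minimizer. -/
lemma aux_growth {f : P → ℝ} (hf : ConvexOn ℝ Set.univ f) {w : P} {lam : ℝ} (hlam : 0 < lam)
    {u' : P} (hmin : ∀ u, f u' + ‖w - u'‖ ^ 2 / (2 * lam) ≤ f u + ‖w - u‖ ^ 2 / (2 * lam))
    (u : P) :
    f u' + ‖w - u'‖ ^ 2 / (2 * lam) + ‖u - u'‖ ^ 2 / (4 * lam)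
      ≤ f u + ‖w - u‖ ^ 2 / (2 * lam) := by
  have hm := aux_mid hf w hlam u u'
  have h0 := hmin ((1/2:ℝ) • u + (1/2:ℝ) • u')
  have he : ‖u - u'‖ ^ 2 / (4 * lam) = 2 * (‖u - u'‖ ^ 2 / (8 * lam)) := by
    field_simp; ring
  linarith
end aux

section aux2
variable {P : Type*} [NormedAddCommGroup P] [InnerProductSpace ℝ P]

/-- An upper semicontinuous-like function (all strict sublevel sets open) on a nonempty
compact space attains its maximum. -/
lemma aux_usc_max {X : Type*} [TopologicalSpace X] [CompactSpace X] [Nonempty X]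
    {D : X → ℝ} (husc : ∀ c : ℝ, IsOpen {v | D v < c}) :
    ∃ v₀ : X, ∀ v : X, D v ≤ D v₀ := by
  by_contra hcon
  push_neg at hcon
  have hcover : (Set.univ : Set X) ⊆ ⋃ v : X, {x | D x < D v} := by
    intro x _
    obtain ⟨v, hv⟩ := hcon x
    exact Set.mem_iUnion.2 ⟨v, hv⟩
  obtain ⟨t, ht⟩ := isCompact_univ.elim_finite_subcover (fun v : X => {x | D x < D v})
    (fun v => husc _) hcover
  have htne : t.Nonempty := by
    rcases Finset.eq_empty_or_nonempty t with h | h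
    · exfalso
      obtain ⟨x⟩ := ‹Nonempty X›
      have := ht (Set.mem_univ x)
      simp [h] at this
    · exact h
  obtain ⟨v₀, hv₀t, hv₀⟩ := t.exists_max_image D htne
  have := ht (Set.mem_univ v₀)
  rw [Set.mem_iUnion₂] at this
  obtain ⟨v, hvt, hv⟩ := this
  exact absurd (hv₀ v hvt) (not_le.2 hv)

/-- Key perturbation lemma: if `u'` minimizes the Moreau objective of `g`, and mixing in a
little of `g₁` never increases the optimal value, then `g₁ u' + q u'` is at most the
optimal value for `g`. -/
lemma aux_perturb [CompleteSpace P] {lam : ℝ} (hlam : 0 < lam) {w : P} {g g₁ : P → ℝ}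
    (hg : ConvexOn ℝ Set.univ g) (hgc : Continuous g)
    (hg1 : ConvexOn ℝ Set.univ g₁) (hg1c : Continuous g₁)
    (hmix : ∀ t : ℝ, 0 < t → t < 1 →
      (⨅ u : P, ((1-t) * g u + t * g₁ u + ‖w - u‖ ^ 2 / (2 * lam)))
        ≤ ⨅ u : P, (g u + ‖w - u‖ ^ 2 / (2 * lam)))
    {u' : P} (hu' : ∀ u, g u' + ‖w - u'‖ ^ 2 / (2 * lam) ≤ g u + ‖w - u‖ ^ 2 / (2 * lam)) :
    g₁ u' + ‖w - u'‖ ^ 2 / (2 * lam) ≤ ⨅ u : P, (g u + ‖w - u‖ ^ 2 / (2 * lam)) := by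
  obtain ⟨c₁, hc₁⟩ := aux_bddBelow hg1 hg1c w hlam
  have hDstar : (⨅ u : P, (g u + ‖w - u‖ ^ 2 / (2 * lam))) = g u' + ‖w - u'‖ ^ 2 / (2 * lam) := by
    apply le_antisymm
    · exact ciInf_le ⟨g u' + ‖w - u'‖ ^ 2 / (2 * lam), by rintro _ ⟨v, rfl⟩; exact hu' v⟩ u'
    · exact le_ciInf hu'
  set Dstar : ℝ := g u' + ‖w - u'‖ ^ 2 / (2 * lam) with hDs
  rw [hDstar]
  -- the sequence of mixing parameters
  set t : ℕ → ℝ := fun n => 1/((n:ℝ)+2) with htdef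
  have ht0 : ∀ n, 0 < t n := fun n => by positivity
  have ht1 : ∀ n, t n < 1 := fun n => by
    rw [htdef]; rw [div_lt_one (by positivity)]
    have : (0:ℝ) ≤ (n:ℝ) := Nat.cast_nonneg n
    linarith
  have ht2 : ∀ n, t n ≤ 1/2 := fun n => by
    rw [htdef]
    apply one_div_le_one_div_of_le (by norm_num)
    have : (0:ℝ) ≤ (n:ℝ) := Nat.cast_nonneg n
    linarith
  -- mixtures are convex and continuous
  have hmixconv : ∀ n, ConvexOn ℝ Set.univ (fun u => (1 - t n) * g u + t n * g₁ u) := by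
    intro n
    have h1 : ConvexOn ℝ Set.univ (fun u => (1 - t n) * g u) := by
      simpa [smul_eq_mul] using hg.smul (by linarith [ht1 n] : (0:ℝ) ≤ 1 - t n)
    have h2 : ConvexOn ℝ Set.univ (fun u => t n * g₁ u) := by
      simpa [smul_eq_mul] using hg1.smul (ht0 n).le
    exact h1.add h2
  have hmixcont : ∀ n, Continuous (fun u => (1 - t n) * g u + t n * g₁ u) := fun n =>
    (continuous_const.mul hgc).add (continuous_const.mul hg1c)
  -- argmins of mixtures
  have hargmin := fun n => aux_argmin (hmixconv n) (hmixcont n) w hlam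
  choose ut hut using hargmin
  -- value identities
  have hDt : ∀ n, (⨅ u : P, ((1 - t n) * g u + t n * g₁ u + ‖w - u‖ ^ 2 / (2 * lam)))
      = (1 - t n) * g (ut n) + t n * g₁ (ut n) + ‖w - ut n‖ ^ 2 / (2 * lam) := by
    intro n
    apply le_antisymm
    · exact ciInf_le ⟨_, by rintro _ ⟨v, rfl⟩; exact hut n v⟩ (ut n)
    · exact le_ciInf (hut n)
  -- key inequality chain
  have hkey : ∀ n, t n * Dstar ≥ (1 - t n) * (‖ut n - u'‖ ^ 2 / (4 * lam))
      + t n * (g₁ (ut n) + ‖w - ut n‖ ^ 2 / (2 * lam)) := by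
    intro n
    have h1 : (1 - t n) * g (ut n) + t n * g₁ (ut n) + ‖w - ut n‖ ^ 2 / (2 * lam) ≤ Dstar := by
      rw [← hDstar, ← hDt n]
      exact hmix (t n) (ht0 n) (ht1 n)
    have h2 := aux_growth hg hlam hu' (ut n)
    -- h2 : Dstar + ‖ut n - u'‖²/(4λ) ≤ g (ut n) + ‖w - ut n‖²/(2λ)
    have h3 : (1 - t n) * (Dstar + ‖ut n - u'‖ ^ 2 / (4 * lam))
        ≤ (1 - t n) * (g (ut n) + ‖w - ut n‖ ^ 2 / (2 * lam)) :=
      mul_le_mul_of_nonneg_left h2 (by linarith [ht1 n])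
    nlinarith [h1, h3]
  -- consequences
  have hg1le : ∀ n, g₁ (ut n) + ‖w - ut n‖ ^ 2 / (2 * lam) ≤ Dstar := by
    intro n
    have hk := hkey n
    have hA : 0 ≤ (1 - t n) * (‖ut n - u'‖ ^ 2 / (4 * lam)) := by
      have : (0:ℝ) ≤ 1 - t n := by linarith [ht1 n]
      positivity
    have := (ht0 n)
    nlinarith
  have hdist : ∀ n, ‖ut n - u'‖ ^ 2 ≤ 8 * lam * (Dstar - c₁) * t n := by
    intro n
    have hk := hkey n
    have hc := hc₁ (ut n)
    have h1t : (1:ℝ)/2 ≤ 1 - t n := by linarith [ht2 n]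
    have h2 : (1 - t n) * (‖ut n - u'‖ ^ 2 / (4 * lam)) ≤ t n * (Dstar - c₁) := by
      have hint := mul_le_mul_of_nonneg_left hc (ht0 n).le
      nlinarith [hint]
    have h3 : (1/2 : ℝ) * (‖ut n - u'‖ ^ 2 / (4 * lam)) ≤ t n * (Dstar - c₁) := by
      have h4 : (0:ℝ) ≤ ‖ut n - u'‖ ^ 2 / (4 * lam) := by positivity
      nlinarith
    have h5 : ‖ut n - u'‖ ^ 2 / (8 * lam) ≤ t n * (Dstar - c₁) := by
      have e : (1/2 : ℝ) * (‖ut n - u'‖ ^ 2 / (4 * lam)) = ‖ut n - u'‖ ^ 2 / (8 * lam) := by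
        ring
      linarith [e ▸ h3]
    have h6 := mul_le_mul_of_nonneg_right h5 (by positivity : (0:ℝ) ≤ 8 * lam)
    have e1 : ‖ut n - u'‖ ^ 2 / (8 * lam) * (8 * lam) = ‖ut n - u'‖ ^ 2 := by field_simp
    rw [e1] at h6
    calc ‖ut n - u'‖ ^ 2 ≤ t n * (Dstar - c₁) * (8 * lam) := h6
      _ = 8 * lam * (Dstar - c₁) * t n := by ring
  -- ut n → u'
  have htt0 : Tendsto t atTop (𝓝 0) := by
    rw [htdef]
    have h1 : Tendsto (fun n : ℕ => 1/((n:ℝ)+1)) atTop (𝓝 0) :=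
      tendsto_one_div_add_atTop_nhds_zero_nat
    apply squeeze_zero (fun n => by positivity) (fun n => ?_) h1
    apply one_div_le_one_div_of_le (by positivity)
    linarith
  have hsq0 : Tendsto (fun n => ‖ut n - u'‖ ^ 2) atTop (𝓝 0) := by
    apply squeeze_zero (fun n => by positivity) hdist
    have h8 := htt0.const_mul (8 * lam * (Dstar - c₁))
    rw [mul_zero] at h8
    exact h8
  have hutu' : Tendsto ut atTop (𝓝 u') := by
    rw [tendsto_iff_dist_tendsto_zero]
    have hsqrt := hsq0.sqrt
    simp only [Real.sqrt_zero] at hsqrt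
    have e : ∀ n, Real.sqrt (‖ut n - u'‖ ^ 2) = dist (ut n) u' := by
      intro n
      rw [Real.sqrt_sq (norm_nonneg _), dist_eq_norm]
    simpa [e] using hsqrt
  -- conclude by continuity
  have hcont : Continuous (fun u : P => g₁ u + ‖w - u‖ ^ 2 / (2 * lam)) :=
    hg1c.add (((continuous_const.sub continuous_id).norm.pow 2).div_const (2 * lam))
  have hlim : Tendsto (fun n => g₁ (ut n) + ‖w - ut n‖ ^ 2 / (2 * lam)) atTop
      (𝓝 (g₁ u' + ‖w - u'‖ ^ 2 / (2 * lam))) := (hcont.tendsto u').comp hutu'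
  exact le_of_tendsto hlim (Filter.Eventually.of_forall hg1le)
end aux2

/-- The Moreau envelope of a function `S : H × E → ℝ` (written in two arguments)
with parameter `lam`, using the Hilbert norm of the product
`‖(x,z) − u‖² = ‖x − u.1‖² + ‖z − u.2‖²`. -/
noncomputable def moreauEnv2 {H E : Type*} [NormedAddCommGroup H] [InnerProductSpace ℝ H]
    [NormedAddCommGroup E] [InnerProductSpace ℝ E]
    (S : H → E → ℝ) (lam : ℝ) (x : H) (z : E) : ℝ :=
  ⨅ u : H × E, (S u.1 u.2 + (‖x - u.1‖ ^ 2 + ‖z - u.2‖ ^ 2) / (2 * lam))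

/-- Proposition 2.4: the Moreau envelope of the supremum function
`S(x,z) = sup_{v* ∈ C} ( v*(Φ(x,z)) + h(x) )` is the (attained) maximum over `v* ∈ C`
of the Moreau envelopes of the scalarizations `Φ^h_{v*}(x,z) = v*(Φ(x,z)) + h(x)`. -/
theorem stmt3 {H Y : Type*} [NormedAddCommGroup H] [InnerProductSpace ℝ H] [CompleteSpace H]
    [SecondCountableTopology H]
    [NormedAddCommGroup Y] [NormedSpace ℝ Y] [CompleteSpace Y] {m : ℕ}
    (C : Set (WeakDual ℝ Y)) (hCne : C.Nonempty) (hCconv : Convex ℝ C) (hCcpt : IsCompact C)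
    (Φ : H → EuclideanSpace ℝ (Fin m) → Y)
    (hΦ : Continuous fun p : H × EuclideanSpace ℝ (Fin m) => Φ p.1 p.2)
    (h : H → ℝ) (hconv : ConvexOn ℝ Set.univ h) (hC1 : ContDiff ℝ 1 h)
    (hscal : ∀ v ∈ C, ConvexOn ℝ Set.univ
      (fun p : H × EuclideanSpace ℝ (Fin m) => v (Φ p.1 p.2) + h p.1))
    (S : H → EuclideanSpace ℝ (Fin m) → ℝ)
    (hS : ∀ x z, S x z = ⨆ v : C, ((v : WeakDual ℝ Y) (Φ x z) + h x)) :
    ∀ lam : ℝ, 0 < lam → ∀ (x : H) (z : EuclideanSpace ℝ (Fin m)),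
      IsGreatest
        {r : ℝ | ∃ v ∈ C, r = moreauEnv2 (fun x' z' => v (Φ x' z') + h x') lam x z}
        (moreauEnv2 S lam x z) := by
  intro lam hlam x z
  classical
  haveI : Nonempty C := hCne.to_subtype
  set w : WithLp 2 (H × EuclideanSpace ℝ (Fin m)) :=
    (WithLp.equiv 2 (H × EuclideanSpace ℝ (Fin m))).symm (x, z) with hw
  have hnorm : ∀ u : WithLp 2 (H × EuclideanSpace ℝ (Fin m)),
      ‖w - u‖ ^ 2 = ‖x - u.fst‖ ^ 2 + ‖z - u.snd‖ ^ 2 := fun u => by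
    rw [WithLp.prod_norm_sq_eq_of_L2]; rfl
  have menv : ∀ g : H → EuclideanSpace ℝ (Fin m) → ℝ,
      moreauEnv2 g lam x z
        = ⨅ u : WithLp 2 (H × EuclideanSpace ℝ (Fin m)), (g u.fst u.snd + ‖w - u‖ ^ 2 / (2 * lam)) := by
    intro g
    have e : (fun u : WithLp 2 (H × EuclideanSpace ℝ (Fin m)) => g u.fst u.snd + ‖w - u‖ ^ 2 / (2 * lam))
        = fun u : WithLp 2 (H × EuclideanSpace ℝ (Fin m)) =>
            g u.fst u.snd + (‖x - u.fst‖ ^ 2 + ‖z - u.snd‖ ^ 2) / (2 * lam) := by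
      funext u; rw [hnorm]
    rw [e]
    exact Equiv.iInf_comp (g := fun u : WithLp 2 (H × EuclideanSpace ℝ (Fin m)) =>
      g u.fst u.snd + (‖x - u.fst‖ ^ 2 + ‖z - u.snd‖ ^ 2) / (2 * lam)) (WithLp.equiv 2 _).symm
  -- scalarizations on the product Hilbert space
  have hφconv : ∀ v ∈ C, ConvexOn ℝ Set.univ
      (fun u : WithLp 2 (H × EuclideanSpace ℝ (Fin m)) => v (Φ u.fst u.snd) + h u.fst) :=
    fun v hv => (hscal v hv).comp_linearMap (WithLp.linearEquiv 2 ℝ _).toLinearMap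
  have hφcont : ∀ v : WeakDual ℝ Y, Continuous
      (fun u : WithLp 2 (H × EuclideanSpace ℝ (Fin m)) => v (Φ u.fst u.snd) + h u.fst) := by
    intro v
    have h1 : Continuous (fun p : H × EuclideanSpace ℝ (Fin m) => v (Φ p.1 p.2) + h p.1) :=
      ((ContinuousLinearMap.continuous (v : Y →L[ℝ] ℝ)).comp hΦ).add
        (hC1.continuous.comp continuous_fst)
    exact h1.comp (WithLp.prod_continuous_ofLp 2 H (EuclideanSpace ℝ (Fin m)))
  -- pointwise attained supremum
  have heval : ∀ u : WithLp 2 (H × EuclideanSpace ℝ (Fin m)), ∃ v₁ ∈ C,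
      (∀ v' ∈ C, v' (Φ u.fst u.snd) + h u.fst ≤ v₁ (Φ u.fst u.snd) + h u.fst)
      ∧ S u.fst u.snd = v₁ (Φ u.fst u.snd) + h u.fst := by
    intro u
    have hc : Continuous (fun v : WeakDual ℝ Y => v (Φ u.fst u.snd) + h u.fst) :=
      (WeakDual.eval_continuous _).add continuous_const
    obtain ⟨v₁, hv₁C, hmax⟩ := hCcpt.exists_isMaxOn hCne hc.continuousOn
    have hbddA : BddAbove (Set.range fun v : C => (v : WeakDual ℝ Y) (Φ u.fst u.snd) + h u.fst) := by
      refine ⟨v₁ (Φ u.fst u.snd) + h u.fst, ?_⟩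
      rintro _ ⟨v, rfl⟩
      exact hmax v.2
    refine ⟨v₁, hv₁C, fun v' hv' => hmax hv', ?_⟩
    rw [hS]
    apply le_antisymm
    · exact ciSup_le fun v => hmax v.2
    · exact le_ciSup hbddA ⟨v₁, hv₁C⟩
  have hφleS : ∀ v ∈ C, ∀ u : WithLp 2 (H × EuclideanSpace ℝ (Fin m)),
      v (Φ u.fst u.snd) + h u.fst ≤ S u.fst u.snd := by
    intro v hv u
    obtain ⟨v₁, hv₁C, hmax, hSe⟩ := heval u
    rw [hSe]; exact hmax v hv
  have hbddb : ∀ v ∈ C, ∃ c, ∀ u : WithLp 2 (H × EuclideanSpace ℝ (Fin m)),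
      c ≤ v (Φ u.fst u.snd) + h u.fst + ‖w - u‖ ^ 2 / (2 * lam) :=
    fun v hv => aux_bddBelow (hφconv v hv) (hφcont v) w hlam
  -- upper bound half
  have hub : ∀ r ∈ {r : ℝ | ∃ v ∈ C, r = moreauEnv2 (fun x' z' => v (Φ x' z') + h x') lam x z},
      r ≤ moreauEnv2 S lam x z := by
    rintro r ⟨v, hv, rfl⟩
    rw [menv, menv]
    obtain ⟨c, hc⟩ := hbddb v hv
    apply le_ciInf
    intro u
    have h1 : (⨅ u : WithLp 2 (H × EuclideanSpace ℝ (Fin m)),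
        (v (Φ u.fst u.snd) + h u.fst + ‖w - u‖ ^ 2 / (2 * lam)))
        ≤ v (Φ u.fst u.snd) + h u.fst + ‖w - u‖ ^ 2 / (2 * lam) :=
      ciInf_le ⟨c, by rintro _ ⟨u', rfl⟩; exact hc u'⟩ u
    exact h1.trans (add_le_add_left (hφleS v hv u) _)
  -- the dual function and its maximizer over C
  haveI : CompactSpace C := isCompact_iff_compactSpace.mp hCcpt
  have husc : ∀ c : ℝ, IsOpen {vv : C | (⨅ u : WithLp 2 (H × EuclideanSpace ℝ (Fin m)),
      ((vv : WeakDual ℝ Y) (Φ u.fst u.snd) + h u.fst + ‖w - u‖ ^ 2 / (2 * lam))) < c} := by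
    intro c
    have e : {vv : C | (⨅ u : WithLp 2 (H × EuclideanSpace ℝ (Fin m)),
        ((vv : WeakDual ℝ Y) (Φ u.fst u.snd) + h u.fst + ‖w - u‖ ^ 2 / (2 * lam))) < c}
        = ⋃ u : WithLp 2 (H × EuclideanSpace ℝ (Fin m)),
          {vv : C | (vv : WeakDual ℝ Y) (Φ u.fst u.snd) + h u.fst + ‖w - u‖ ^ 2 / (2 * lam) < c} := by
      ext vv
      simp only [Set.mem_setOf_eq, Set.mem_iUnion]
      constructor
      · intro hlt
        exact exists_lt_of_ciInf_lt hlt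
      · rintro ⟨u, hu⟩
        obtain ⟨c', hc'⟩ := hbddb vv.1 vv.2
        exact lt_of_le_of_lt (ciInf_le ⟨c', by rintro _ ⟨u', rfl⟩; exact hc' u'⟩ u) hu
    rw [e]
    apply isOpen_iUnion
    intro u
    have hcv : Continuous fun vv : C =>
        (vv : WeakDual ℝ Y) (Φ u.fst u.snd) + h u.fst + ‖w - u‖ ^ 2 / (2 * lam) :=
      (((WeakDual.eval_continuous _).comp continuous_subtype_val).add continuous_const).add
        continuous_const
    exact isOpen_lt hcv continuous_const
  obtain ⟨vstar, hvstarmax⟩ := aux_usc_max husc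
  -- argmin for vstar's Moreau objective
  obtain ⟨ustar, hustar⟩ := aux_argmin (hφconv vstar.1 vstar.2) (hφcont vstar.1) w hlam
  -- maximizer of the scalarization at ustar
  obtain ⟨v₁, hv₁C, hv₁max, hSe⟩ := heval ustar
  -- mixing hypothesis
  have hmix : ∀ t : ℝ, 0 < t → t < 1 →
      (⨅ u : WithLp 2 (H × EuclideanSpace ℝ (Fin m)),
        ((1-t) * ((vstar : WeakDual ℝ Y) (Φ u.fst u.snd) + h u.fst)
          + t * (v₁ (Φ u.fst u.snd) + h u.fst) + ‖w - u‖ ^ 2 / (2 * lam)))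
      ≤ ⨅ u : WithLp 2 (H × EuclideanSpace ℝ (Fin m)),
        ((vstar : WeakDual ℝ Y) (Φ u.fst u.snd) + h u.fst + ‖w - u‖ ^ 2 / (2 * lam)) := by
    intro t ht0 ht1
    have hvt : (1-t) • (vstar : WeakDual ℝ Y) + t • v₁ ∈ C :=
      hCconv vstar.2 hv₁C (by linarith) ht0.le (by ring)
    have e : (fun u : WithLp 2 (H × EuclideanSpace ℝ (Fin m)) =>
        (1-t) * ((vstar : WeakDual ℝ Y) (Φ u.fst u.snd) + h u.fst)
          + t * (v₁ (Φ u.fst u.snd) + h u.fst) + ‖w - u‖ ^ 2 / (2 * lam))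
        = fun u : WithLp 2 (H × EuclideanSpace ℝ (Fin m)) =>
          ((1-t) • (vstar : WeakDual ℝ Y) + t • v₁) (Φ u.fst u.snd) + h u.fst
            + ‖w - u‖ ^ 2 / (2 * lam) := by
      funext u
      have happ : ((1-t) • (vstar : WeakDual ℝ Y) + t • v₁) (Φ u.fst u.snd)
          = (1-t) * ((vstar : WeakDual ℝ Y) (Φ u.fst u.snd)) + t * (v₁ (Φ u.fst u.snd)) := rfl
      rw [happ]; ring
    rw [e]
    exact hvstarmax ⟨(1-t) • (vstar : WeakDual ℝ Y) + t • v₁, hvt⟩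
  -- perturbation conclusion
  have hperturb := aux_perturb hlam
    (g := fun u : WithLp 2 (H × EuclideanSpace ℝ (Fin m)) =>
      (vstar : WeakDual ℝ Y) (Φ u.fst u.snd) + h u.fst)
    (g₁ := fun u : WithLp 2 (H × EuclideanSpace ℝ (Fin m)) => v₁ (Φ u.fst u.snd) + h u.fst)
    (hφconv vstar.1 vstar.2) (hφcont vstar.1) (hφconv v₁ hv₁C) (hφcont v₁) hmix hustar
  -- lower bound of the S-objective
  have hSbdd : BddBelow (Set.range fun u : WithLp 2 (H × EuclideanSpace ℝ (Fin m)) =>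
      S u.fst u.snd + ‖w - u‖ ^ 2 / (2 * lam)) := by
    obtain ⟨c, hc⟩ := hbddb vstar.1 vstar.2
    refine ⟨c, ?_⟩
    rintro _ ⟨u, rfl⟩
    exact (hc u).trans (add_le_add_left (hφleS vstar.1 vstar.2 u) _)
  have hkey2 : moreauEnv2 S lam x z
      ≤ moreauEnv2 (fun x' z' => (vstar : WeakDual ℝ Y) (Φ x' z') + h x') lam x z := by
    rw [menv, menv]
    have h1 : (⨅ u : WithLp 2 (H × EuclideanSpace ℝ (Fin m)),
        (S u.fst u.snd + ‖w - u‖ ^ 2 / (2 * lam)))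
        ≤ S ustar.fst ustar.snd + ‖w - ustar‖ ^ 2 / (2 * lam) := ciInf_le hSbdd ustar
    have h2 : S ustar.fst ustar.snd + ‖w - ustar‖ ^ 2 / (2 * lam)
        = v₁ (Φ ustar.fst ustar.snd) + h ustar.fst + ‖w - ustar‖ ^ 2 / (2 * lam) := by rw [hSe]
    exact h1.trans (h2.le.trans hperturb)
  exact ⟨⟨vstar.1, vstar.2, le_antisymm hkey2 (hub _ ⟨vstar.1, vstar.2, rfl⟩)⟩, hub⟩
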